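/- Let Y be a discrete random variable with values in the selfadjoint operators on a d-dimensional complex Hilbert space, B a selfadjoint operator, and T an operator with T*T positive definite. Then Pr{ Y ≰ B } ≤ Tr( 𝔼 exp(T·Y·T* − T·B·T*) ), where exp is the operator exponential. -/

import Mathlib

open scoped BigOperators
open ComplexOrder
open scoped Matrix

def IsProbDist {α : Type*} [Fintype α] (P : α → ℝ) : Prop :=
  (∀ a, 0 ≤ P a) ∧ ∑ a, P a = 1

/-- Probability of an event under a finitely supported distribution. -/
noncomputable def prOf {α : Type*} [Fintype α] (p : α → ℝ) (s : Set α) : ℝ :=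
  ∑ a, s.indicator p a

lemma herm_conj {d : ℕ} {A : Matrix (Fin d) (Fin d) ℂ} (hA : A.IsHermitian)
    (T : Matrix (Fin d) (Fin d) ℂ) : (T * A * Tᴴ).IsHermitian := by
  unfold Matrix.IsHermitian
  simp [Matrix.conjTranspose_mul, hA.eq, Matrix.mul_assoc]

lemma trace_exp_herm {d : ℕ} {A : Matrix (Fin d) (Fin d) ℂ} (hA : A.IsHermitian) :
    (NormedSpace.exp A).trace = ∑ i, (Real.exp (hA.eigenvalues i) : ℂ) := by
  set U : Matrix (Fin d) (Fin d) ℂ := (hA.eigenvectorUnitary : Matrix (Fin d) (Fin d) ℂ)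
  have hUU : U * star U = 1 := Matrix.mem_unitaryGroup_iff.mp hA.eigenvectorUnitary.2
  have hU'U : star U * U = 1 := Matrix.mem_unitaryGroup_iff'.mp hA.eigenvectorUnitary.2
  have hU : IsUnit U := ⟨⟨U, star U, hUU, hU'U⟩, rfl⟩
  have hinv : star U = U⁻¹ := Matrix.inv_eq_right_inv hUU |>.symm
  have hst : A = U * Matrix.diagonal (RCLike.ofReal ∘ hA.eigenvalues) * U⁻¹ := by
    rw [← hinv]; exact hA.spectral_theorem.trans (Unitary.conjStarAlgAut_apply _ _)
  conv_lhs => rw [hst]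
  rw [Matrix.exp_conj U _ hU, Matrix.trace_mul_cycle, ← hinv, hU'U, one_mul,
    Matrix.exp_diagonal, Matrix.trace_diagonal]
  congr 1
  ext i
  rw [Pi.coe_exp, Function.comp_apply, ← Complex.exp_eq_exp_ℂ]
  exact (Complex.ofReal_exp _).symm

lemma neg_posSemidef_of_eigenvalues_nonpos {d : ℕ} {A : Matrix (Fin d) (Fin d) ℂ}
    (hA : A.IsHermitian) (h : ∀ i, hA.eigenvalues i ≤ 0) : (-A).PosSemidef := by
  have hdiag : Matrix.diagonal (RCLike.ofReal ∘ (fun i => -hA.eigenvalues i) : Fin d → ℂ)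
      = - Matrix.diagonal (RCLike.ofReal ∘ hA.eigenvalues) := by
    rw [show (RCLike.ofReal ∘ (fun i => -hA.eigenvalues i) : Fin d → ℂ)
        = fun i => -(RCLike.ofReal (hA.eigenvalues i) : ℂ) from
      funext fun i => by simp [RCLike.ofReal_neg], Matrix.diagonal_neg]
    rfl
  have key : -A = (hA.eigenvectorUnitary : Matrix (Fin d) (Fin d) ℂ) *
      Matrix.diagonal (RCLike.ofReal ∘ (fun i => -hA.eigenvalues i)) *
      (hA.eigenvectorUnitary : Matrix (Fin d) (Fin d) ℂ)ᴴ := by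
    conv_lhs => rw [hA.spectral_theorem]
    rw [Unitary.conjStarAlgAut_apply, hdiag, Matrix.mul_neg, Matrix.neg_mul, Matrix.star_eq_conjTranspose]
  rw [key]
  refine (Matrix.posSemidef_diagonal_iff.mpr fun i => ?_).mul_mul_conjTranspose_same _
  simp only [Function.comp_apply]
  exact RCLike.ofReal_nonneg.mpr (neg_nonneg.mpr (h i))

lemma exists_eigenvalue_nonneg {d : ℕ} {A B : Matrix (Fin d) (Fin d) ℂ}
    (hA : A.IsHermitian) (hB : B.IsHermitian) (hns : ¬ (B - A).PosSemidef)
    {T : Matrix (Fin d) (Fin d) ℂ} (hT : (Tᴴ * T).PosDef) :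
    ∃ i, 0 ≤ (herm_conj (hA.sub hB) T).eigenvalues i := by
  by_contra hcon
  push_neg at hcon
  set M : Matrix (Fin d) (Fin d) ℂ := T * (A - B) * Tᴴ with hMdef
  have hpsd : (-M).PosSemidef :=
    neg_posSemidef_of_eigenvalues_nonpos (herm_conj (hA.sub hB) T)
      (fun i => (hcon i).le)
  -- T is invertible
  have hdet : (Tᴴ * T).det ≠ 0 := ne_of_gt hT.det_pos
  rw [Matrix.det_mul] at hdet
  have hdetT : Tᴴ.det ≠ 0 := fun h => hdet (by rw [h, zero_mul])
  -- the quadratic form of B - A fails somewhere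
  have hherm : (B - A).IsHermitian := hB.sub hA
  obtain ⟨v, hv⟩ : ∃ v, ¬ (0 : ℂ) ≤ dotProduct (star v) ((B - A) *ᵥ v) := by
    by_contra hall
    push_neg at hall
    exact hns (.of_dotProduct_mulVec_nonneg hherm hall)
  apply hv
  obtain ⟨x, hTx⟩ : ∃ x, Tᴴ *ᵥ x = v :=
    ⟨(Tᴴ)⁻¹ *ᵥ v, by rw [Matrix.mulVec_mulVec,
      Matrix.mul_nonsing_inv _ (isUnit_iff_ne_zero.mpr hdetT), Matrix.one_mulVec]⟩
  have hq := hpsd.dotProduct_mulVec_nonneg x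
  have hcalc : dotProduct (star x) (M *ᵥ x)
      = dotProduct (star v) ((A - B) *ᵥ v) := by
    rw [← hTx, hMdef, ← Matrix.mulVec_mulVec, ← Matrix.mulVec_mulVec,
      Matrix.dotProduct_mulVec, Matrix.star_mulVec, Matrix.conjTranspose_conjTranspose]
  rw [Matrix.neg_mulVec, dotProduct_neg, hcalc, ← dotProduct_neg,
    ← Matrix.neg_mulVec, neg_sub] at hq
  exact hq

lemma trace_exp_re_nonneg {d : ℕ} {A : Matrix (Fin d) (Fin d) ℂ} (hA : A.IsHermitian) :
    0 ≤ (NormedSpace.exp A).trace.re := by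
  rw [trace_exp_herm hA]
  simp only [Complex.re_sum, Complex.ofReal_re]
  exact Finset.sum_nonneg fun i _ => (Real.exp_pos _).le

lemma one_le_trace_exp_re {d : ℕ} {A : Matrix (Fin d) (Fin d) ℂ} (hA : A.IsHermitian)
    (h : ∃ i, 0 ≤ hA.eigenvalues i) : 1 ≤ (NormedSpace.exp A).trace.re := by
  rw [trace_exp_herm hA]
  simp only [Complex.re_sum, Complex.ofReal_re]
  obtain ⟨j, hj⟩ := h
  calc (1 : ℝ) ≤ Real.exp (hA.eigenvalues j) := by
        simpa using Real.exp_le_exp.mpr hj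
    _ ≤ ∑ i, Real.exp (hA.eigenvalues i) :=
        Finset.single_le_sum (fun i _ => (Real.exp_pos _).le) (Finset.mem_univ j)

theorem stmt13 {d : ℕ} {Ω : Type*} [Fintype Ω] (p : Ω → ℝ) (hp : IsProbDist p)
    (Yv : Ω → Matrix (Fin d) (Fin d) ℂ) (hY : ∀ ω, (Yv ω).IsHermitian)
    (B : Matrix (Fin d) (Fin d) ℂ) (hB : B.IsHermitian)
    (T : Matrix (Fin d) (Fin d) ℂ) (hT : (Tᴴ * T).PosDef) :
    prOf p {ω | ¬ (B - Yv ω).PosSemidef}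
      ≤ (∑ ω, (p ω : ℂ) • NormedSpace.exp (T * Yv ω * Tᴴ - T * B * Tᴴ)).trace.re := by
  have hrw : ∀ ω, T * Yv ω * Tᴴ - T * B * Tᴴ = T * (Yv ω - B) * Tᴴ := fun ω => by
    rw [Matrix.mul_sub, Matrix.sub_mul]
  simp only [hrw]
  rw [Matrix.trace_sum, Complex.re_sum]
  unfold prOf
  apply Finset.sum_le_sum
  intro ω _
  have hherm : (T * (Yv ω - B) * Tᴴ).IsHermitian := herm_conj ((hY ω).sub hB) T
  have ht0 : 0 ≤ (NormedSpace.exp (T * (Yv ω - B) * Tᴴ)).trace.re :=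
    trace_exp_re_nonneg hherm
  have hterm : ((p ω : ℂ) • NormedSpace.exp (T * (Yv ω - B) * Tᴴ)).trace.re
      = p ω * (NormedSpace.exp (T * (Yv ω - B) * Tᴴ)).trace.re := by
    rw [Matrix.trace_smul, smul_eq_mul]
    simp [Complex.mul_re]
  rw [hterm]
  by_cases hω : (B - Yv ω).PosSemidef
  · rw [show {ω | ¬(B - Yv ω).PosSemidef}.indicator p ω = 0 from
      Set.indicator_of_notMem (by simpa using not_not_intro hω) p]
    exact mul_nonneg (hp.1 ω) ht0
  · rw [show {ω | ¬(B - Yv ω).PosSemidef}.indicator p ω = p ω from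
      Set.indicator_of_mem (show ω ∈ {ω | ¬(B - Yv ω).PosSemidef} from hω) p]
    have h1 : 1 ≤ (NormedSpace.exp (T * (Yv ω - B) * Tᴴ)).trace.re :=
      one_le_trace_exp_re hherm (exists_eigenvalue_nonneg (hY ω) hB hω hT)
    calc p ω = p ω * 1 := (mul_one _).symm
      _ ≤ _ := mul_le_mul_of_nonneg_left h1 (hp.1 ω)
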